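/- Let m ≥ 1 and let α_1 ≥ α_2 ≥ … ≥ α_m ≥ 1 and 0 ≤ β_1 < β_2 < … < β_m be integers satisfying α_{r+1} + β_{r+1} = α_r + β_r + 1 for all 1 ≤ r ≤ m−1. Then the coefficient sequence of the polynomial P(x) = Σ_{r=1}^m x^{α_r}(1+x)^{β_r} is log-concave with no internal zeros; in particular it is unimodal. -/
import Mathlib

open Finset Polynomial

namespace StaircaseAux

/-- coefficient function of `X^a * (1+X)^b` -/
def row (a b k : ℕ) : ℕ := if a ≤ k then b.choose (k - a) else 0

lemma row_eq_zero_of_lt {a b k : ℕ} (h : k < a) : row a b k = 0 := by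
  simp [row, Nat.not_le.mpr h]

lemma row_eq_zero_of_gt {a b k : ℕ} (h : a + b < k) : row a b k = 0 := by
  unfold row
  split
  · exact Nat.choose_eq_zero_of_lt (by omega)
  · rfl

lemma row_pos {a b k : ℕ} (h1 : a ≤ k) (h2 : k ≤ a + b) : 0 < row a b k := by
  simp only [row, if_pos h1]
  exact Nat.choose_pos (by omega)

lemma choose_diag_le (n j t : ℕ) : n.choose j ≤ (n + t).choose (j + t) := by
  induction t with
  | zero => simp
  | succ t ih =>
    calc n.choose j ≤ (n + t).choose (j + t) := ih
    _ ≤ (n + t + 1).choose (j + t + 1) := by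
        rw [Nat.choose_succ_succ]; omega

lemma choose_le_choose_diag {n j y J : ℕ} (h1 : j ≤ J) (h2 : n + J ≤ y + j) :
    n.choose j ≤ y.choose J := by
  obtain ⟨t, rfl⟩ := Nat.exists_eq_add_of_le h1
  calc n.choose j ≤ (n + t).choose (j + t) := choose_diag_le n j t
  _ ≤ y.choose (j + t) := Nat.choose_le_choose _ (by omega)

/-- MUL lemma: `(s+1) * C(n,J) ≤ C(n+s+2, J+s)` -/
lemma succ_mul_choose_le (s n J : ℕ) : (s + 1) * n.choose J ≤ (n + s + 2).choose (J + s) := by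
  induction s with
  | zero => simpa using Nat.choose_le_choose J (show n ≤ n + 2 by omega)
  | succ s ih =>
    have h1 : n.choose J ≤ (n + s + 2).choose (J + s + 1) :=
      choose_le_choose_diag (by omega) (by omega)
    calc (s + 1 + 1) * n.choose J = (s + 1) * n.choose J + n.choose J := by ring
    _ ≤ (n + s + 2).choose (J + s) + (n + s + 2).choose (J + s + 1) := Nat.add_le_add ih h1
    _ = (n + s + 3).choose (J + s + 1) := (Nat.choose_succ_succ _ _).symm
    _ = (n + (s+1) + 2).choose (J + (s+1)) := by ring_nf

/-- log-concavity of a binomial row -/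
lemma choose_lc (n j : ℕ) : n.choose j * n.choose (j + 2) ≤ n.choose (j + 1) ^ 2 := by
  have h1 : n.choose (j + 1) * (j + 1) = n.choose j * (n - j) := Nat.choose_succ_right_eq n j
  have h2 : n.choose (j + 2) * (j + 2) = n.choose (j + 1) * (n - (j + 1)) :=
    Nat.choose_succ_right_eq n (j + 1)
  have key : n.choose j * n.choose (j + 2) * (j + 2) ≤ n.choose (j + 1) ^ 2 * (j + 2) := by
    calc n.choose j * n.choose (j + 2) * (j + 2)
        = n.choose j * (n.choose (j + 2) * (j + 2)) := by ring
      _ = n.choose j * (n.choose (j + 1) * (n - (j + 1))) := by rw [h2]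
      _ = (n.choose j * (n - (j + 1))) * n.choose (j + 1) := by ring
      _ ≤ (n.choose j * (n - j)) * n.choose (j + 1) := by
          have : n - (j+1) ≤ n - j := by omega
          exact Nat.mul_le_mul_right _ (Nat.mul_le_mul_left _ this)
      _ = (n.choose (j + 1) * (j + 1)) * n.choose (j + 1) := by rw [h1]
      _ ≤ n.choose (j + 1) ^ 2 * (j + 2) := by
          have : (j:ℕ) + 1 ≤ j + 2 := by omega
          calc n.choose (j+1) * (j+1) * n.choose (j+1)
              = n.choose (j+1)^2 * (j+1) := by ring
            _ ≤ n.choose (j+1)^2 * (j+2) := Nat.mul_le_mul_left _ this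
  exact Nat.le_of_mul_le_mul_right key (by omega)

lemma row_lc (a b k : ℕ) : row a b k * row a b (k + 2) ≤ row a b (k + 1) ^ 2 := by
  by_cases h : a ≤ k
  · have h1 : a ≤ k + 1 := by omega
    have h2 : a ≤ k + 2 := by omega
    simp only [row, if_pos h, if_pos h1, if_pos h2]
    have e1 : k + 1 - a = (k - a) + 1 := by omega
    have e2 : k + 2 - a = (k - a) + 2 := by omega
    rw [e1, e2]
    exact choose_lc b (k - a)
  · rw [row_eq_zero_of_lt (by omega)]
    simp

/-- ratio identity, in ℤ -/
lemma row_ratio (a b k : ℕ) :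
    ((k : ℤ) + 1 - a) * row a b (k + 1) = ((a : ℤ) + b - k) * row a b k := by
  by_cases h : a ≤ k
  · have h1 : a ≤ k + 1 := by omega
    simp only [row, if_pos h, if_pos h1]
    have e1 : k + 1 - a = (k - a) + 1 := by omega
    rw [e1]
    have := Nat.choose_succ_right_eq b (k - a)
    -- b.choose (k-a+1) * (k-a+1) = b.choose (k-a) * (b - (k-a))
    by_cases hb : k - a ≤ b
    · have cast1 : ((k : ℤ) + 1 - a) = ((k - a + 1 : ℕ) : ℤ) := by
        push_cast; omega
      have cast2 : ((a : ℤ) + b - k) = ((b - (k - a) : ℕ) : ℤ) := by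
        push_cast [Nat.cast_sub hb]; omega
      rw [cast1, cast2]
      exact_mod_cast by rw [mul_comm, mul_comm (b - (k - a))]; exact this
    · -- k - a > b : both choose terms vanish appropriately
      have hb' : b < k - a := by omega
      rw [Nat.choose_eq_zero_of_lt (by omega), Nat.choose_eq_zero_of_lt hb']
      simp
  · -- k < a
    by_cases h1 : a ≤ k + 1
    · -- k + 1 = a
      have : k + 1 = a := by omega
      simp only [row, if_pos h1, if_neg h]
      subst this
      simp
    · rw [row_eq_zero_of_lt (by omega), row_eq_zero_of_lt (by omega)]
      simp

/-- Pascal at row level -/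
lemma row_pascal (a b k : ℕ) : row a b k + row a b (k + 1) = row a (b + 1) (k + 1) := by
  by_cases h : a ≤ k
  · have h1 : a ≤ k + 1 := by omega
    simp only [row, if_pos h, if_pos h1]
    have e1 : k + 1 - a = (k - a) + 1 := by omega
    rw [e1, Nat.choose_succ_succ]
  · by_cases h1 : a ≤ k + 1
    · have : k + 1 = a := by omega
      simp only [row, if_pos h1, if_neg h]
      subst this
      simp
    · rw [row_eq_zero_of_lt (by omega), row_eq_zero_of_lt (by omega),
        row_eq_zero_of_lt (by omega)]

/-- single row dominance with shift -/
lemma row_dom {x y a b : ℕ} (hx : x ≤ a) (hy : a + b + 1 ≤ x + y) (k : ℕ) :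
    row a b k ≤ row x y (k + 1) := by
  by_cases h : a ≤ k
  · have hx1 : x ≤ k + 1 := by omega
    simp only [row, if_pos h, if_pos hx1]
    exact choose_le_choose_diag (by omega) (by omega)
  · rw [row_eq_zero_of_lt (by omega)]; exact Nat.zero_le _

/-- single row dominance without shift -/
lemma row_dom0 {x y a b : ℕ} (hx : x ≤ a) (hy : a + b ≤ x + y) (k : ℕ) :
    row a b k ≤ row x y k := by
  by_cases h : a ≤ k
  · have hx1 : x ≤ k := by omega
    simp only [row, if_pos h, if_pos hx1]
    exact choose_le_choose_diag (by omega) (by omega)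
  · rw [row_eq_zero_of_lt (by omega)]; exact Nat.zero_le _


/-- invariant pack for a staircase partial sum with last row `(a,b)` -/
def IP (c : ℕ → ℕ) (a b : ℕ) : Prop :=
  (∀ k, k < a → c k = 0) ∧ (∀ k, a + b < k → c k = 0) ∧
  (∀ k : ℕ, c k * c (k + 2) ≤ c (k + 1) ^ 2) ∧
  (∀ k : ℕ, ((k : ℤ) - a) * c (k + 1) ≤ ((a : ℤ) + b + 1 - k) * c k) ∧
  (∀ k : ℕ, ((a : ℤ) + b - k) * c k ≤ ((k : ℤ) + 2 - a) * c (k + 1)) ∧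
  (∀ x y, x ≤ a → a + b + 1 ≤ x + y → ∀ k, c k ≤ row x y (k + 1))

lemma ip_base (a b : ℕ) : IP (row a b) a b := by
  refine ⟨fun k hk => row_eq_zero_of_lt hk, fun k hk => row_eq_zero_of_gt hk,
    row_lc a b, ?_, ?_, fun x y hx hy k => row_dom hx hy k⟩
  · intro k
    have r := row_ratio a b k
    have n1 : (0 : ℤ) ≤ (row a b k : ℤ) := Int.ofNat_nonneg _
    have n2 : (0 : ℤ) ≤ (row a b (k + 1) : ℤ) := Int.ofNat_nonneg _
    linarith
  · intro k
    have r := row_ratio a b k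
    have n2 : (0 : ℤ) ≤ (row a b (k + 1) : ℤ) := Int.ofNat_nonneg _
    linarith

lemma ip_step {d : ℕ → ℕ} {a' b' a b : ℕ} (ha : a ≤ a') (hab : a + b = a' + b' + 1)
    (hd : IP d a' b') : IP (fun k => d k + row a b k) a b := by
  obtain ⟨hlow, hhigh, hLC, hH, hH2, hDOM⟩ := hd
  obtain ⟨e, rfl⟩ : ∃ e, a' = a + e := ⟨a' - a, by omega⟩
  have hb : b = b' + e + 1 := by omega
  subst hb
  -- key multiplier bound
  have S1 : ∀ k, e * d (k + 1) ≤ row a (b' + e + 1) k + row a (b' + e + 1) (k + 1) := by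
    intro k
    rcases Nat.eq_zero_or_pos e with he | he
    · subst he; simp
    · have hdom := hDOM (a + e) (b' + 1) le_rfl (by omega) (k + 1)
      have key : e * row (a + e) (b' + 1) (k + 2) ≤ row a (b' + e + 1 + 1) (k + 1) := by
        by_cases hk : a + e ≤ k + 2
        · by_cases hk2 : a ≤ k + 1
          · simp only [row, if_pos hk, if_pos hk2]
            have h := succ_mul_choose_le (e - 1) (b' + 1) (k + 2 - (a + e))
            have h1 : e - 1 + 1 = e := by omega
            have h2 : b' + 1 + (e - 1) + 2 = b' + e + 1 + 1 := by omega
            have h3 : k + 2 - (a + e) + (e - 1) = k + 1 - a := by omega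
            rw [h1, h2, h3] at h
            exact h
          · exfalso; omega
        · rw [row_eq_zero_of_lt (show k + 2 < a + e by omega)]; simp
      calc e * d (k + 1) ≤ e * row (a + e) (b' + 1) (k + 2) := Nat.mul_le_mul_left e hdom
        _ ≤ row a (b' + e + 1 + 1) (k + 1) := key
        _ = row a (b' + e + 1) k + row a (b' + e + 1) (k + 1) := (row_pascal a (b' + e + 1) k).symm
  have DOMf : ∀ k, d k ≤ row a (b' + e + 1) (k + 1) :=
    fun k => hDOM a (b' + e + 1) (by omega) (by omega) k
  set b : ℕ := b' + e + 1 with hbdef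
  -- H for the new sum
  have cH : ∀ k : ℕ, ((k : ℤ) - a) * (d (k + 1) + row a b (k + 1) : ℕ) ≤
      ((a : ℤ) + b + 1 - k) * (d k + row a b k : ℕ) := by
    intro k
    have p1 := row_ratio a b k
    have p2 := hH k
    have p3 : (e : ℤ) * d (k + 1) ≤ (row a b k : ℤ) + row a b (k + 1) := by
      exact_mod_cast S1 k
    have n1 : (0 : ℤ) ≤ (d k : ℤ) := Int.ofNat_nonneg _
    push_cast
    push_cast at p2
    simp only [hbdef] at p1 ⊢
    push_cast at p1 ⊢
    linarith
  -- H2 for the new sum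
  have cH2 : ∀ k : ℕ, ((a : ℤ) + b - k) * (d k + row a b k : ℕ) ≤
      ((k : ℤ) + 2 - a) * (d (k + 1) + row a b (k + 1) : ℕ) := by
    intro k
    have p1 := row_ratio a b k
    have p2 := hH2 k
    have p3 : (d k : ℤ) ≤ (row a b (k + 1) : ℤ) := by exact_mod_cast DOMf k
    have q : (0 : ℤ) ≤ (e : ℤ) * d (k + 1) := by positivity
    have n2 : (0 : ℤ) ≤ (row a b (k + 1) : ℤ) := Int.ofNat_nonneg _
    push_cast
    push_cast at p2
    simp only [hbdef] at p1 ⊢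
    push_cast at p1 ⊢
    linarith
  -- P1 : d k * f (k+2) ≤ d (k+1) * f (k+1)
  have P1 : ∀ k, d k * row a b (k + 2) ≤ d (k + 1) * row a b (k + 1) := by
    intro k
    by_cases hk : a ≤ k + 1
    · have r := row_ratio a b (k + 1)
      have h2 := hH2 k
      have nF : (0 : ℤ) ≤ (row a b (k + 1) : ℤ) := Int.ofNat_nonneg _
      have nD : (0 : ℤ) ≤ (d (k + 1) : ℤ) := Int.ofNat_nonneg _
      have key : ((k : ℤ) + 2 - a) * ((d k : ℤ) * row a b (k + 2)) ≤
          ((k : ℤ) + 2 - a) * ((d (k + 1) : ℤ) * row a b (k + 1)) := by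
        have s1 : ((k : ℤ) + 2 - a) * ((d k : ℤ) * row a b (k + 2)) =
            (((a + e : ℤ) + b' - k) * d k) * row a b (k + 1) := by
          have : ((k : ℤ) + 1 + 1 - a) * (row a b (k + 1 + 1) : ℤ) =
              ((a : ℤ) + b - (k + 1)) * row a b (k + 1) := r
          simp only [hbdef] at this ⊢
          push_cast at this ⊢
          nlinarith [this]
        have s2 : (((a + e : ℤ) + b' - k) * d k) * row a b (k + 1) ≤
            (((k : ℤ) + 2 - (a + e)) * d (k + 1)) * row a b (k + 1) := by
          apply mul_le_mul_of_nonneg_right _ nF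
          exact_mod_cast h2
        have s3 : (((k : ℤ) + 2 - (a + e)) * d (k + 1)) * row a b (k + 1) ≤
            ((k : ℤ) + 2 - a) * ((d (k + 1) : ℤ) * row a b (k + 1)) := by
          have he : (0 : ℤ) ≤ e := Int.ofNat_nonneg _
          nlinarith [mul_nonneg nD nF]
        linarith
      have key2 : ((d k : ℤ) * row a b (k + 2)) ≤ ((d (k + 1) : ℤ) * row a b (k + 1)) :=
        le_of_mul_le_mul_left key (by omega)
      exact_mod_cast key2
    · rw [hlow k (by omega)]; simp
  -- Q : f k * c (k+2) ≤ f (k+1) * c (k+1)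
  have Q : ∀ k, row a b k * (d (k + 2) + row a b (k + 2)) ≤
      row a b (k + 1) * (d (k + 1) + row a b (k + 1)) := by
    intro k
    by_cases hk : a ≤ k
    · have r := row_ratio a b k
      have hc := cH (k + 1)
      have nF : (0 : ℤ) ≤ (row a b k : ℤ) := Int.ofNat_nonneg _
      have key : ((k : ℤ) + 1 - a) * ((row a b k : ℤ) * (d (k + 2) + row a b (k + 2) : ℕ)) ≤
          ((k : ℤ) + 1 - a) * ((row a b (k + 1) : ℤ) * (d (k + 1) + row a b (k + 1) : ℕ)) := by
        have hc' : ((k : ℤ) + 1 - a) * ((d (k + 2) + row a b (k + 2) : ℕ) : ℤ) ≤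
            ((a : ℤ) + b - k) * ((d (k + 1) + row a b (k + 1) : ℕ) : ℤ) := by
          have := cH (k + 1)
          push_cast at this ⊢
          linarith
        calc ((k : ℤ) + 1 - a) * ((row a b k : ℤ) * (d (k + 2) + row a b (k + 2) : ℕ))
            = (row a b k : ℤ) * (((k : ℤ) + 1 - a) * ((d (k + 2) + row a b (k + 2) : ℕ) : ℤ)) := by
              ring
          _ ≤ (row a b k : ℤ) * (((a : ℤ) + b - k) * ((d (k + 1) + row a b (k + 1) : ℕ) : ℤ)) := by
              apply mul_le_mul_of_nonneg_left hc' nF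
          _ = (((a : ℤ) + b - k) * (row a b k : ℤ)) * ((d (k + 1) + row a b (k + 1) : ℕ) : ℤ) := by
              ring
          _ = (((k : ℤ) + 1 - a) * (row a b (k + 1) : ℤ)) * ((d (k + 1) + row a b (k + 1) : ℕ) : ℤ) := by
              rw [r]
          _ = ((k : ℤ) + 1 - a) * ((row a b (k + 1) : ℤ) * (d (k + 1) + row a b (k + 1) : ℕ)) := by
              ring
      have key2 := le_of_mul_le_mul_left key (show (0:ℤ) < (k : ℤ) + 1 - a by omega)
      exact_mod_cast key2
    · rw [row_eq_zero_of_lt (show k < a by omega)]; simp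
  refine ⟨?_, ?_, ?_, cH, cH2, ?_⟩
  · intro k hk
    simp only
    rw [hlow k (by omega), row_eq_zero_of_lt hk]
  · intro k hk
    simp only
    rw [hhigh k (by omega), row_eq_zero_of_gt hk]
  · intro k
    simp only
    have expand : (d k + row a b k) * (d (k + 2) + row a b (k + 2)) =
        d k * d (k + 2) + d k * row a b (k + 2) + row a b k * (d (k + 2) + row a b (k + 2)) := by
      ring
    rw [expand]
    calc d k * d (k + 2) + d k * row a b (k + 2) + row a b k * (d (k + 2) + row a b (k + 2))
        ≤ d (k + 1) ^ 2 + d (k + 1) * row a b (k + 1) +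
          row a b (k + 1) * (d (k + 1) + row a b (k + 1)) :=
          add_le_add (add_le_add (hLC k) (P1 k)) (Q k)
      _ = (d (k + 1) + row a b (k + 1)) ^ 2 := by ring
  · intro x y hx hy k
    obtain ⟨y₀, rfl⟩ : ∃ y₀, y = y₀ + 1 := ⟨y - 1, by omega⟩
    have h1 : d k ≤ row x y₀ (k + 1) := hDOM x y₀ (by omega) (by omega) k
    have h2 : row a b k ≤ row x y₀ k := row_dom0 (by omega) (by omega) k
    calc d k + row a b k ≤ row x y₀ (k + 1) + row x y₀ k := add_le_add h1 h2
      _ = row x y₀ k + row x y₀ (k + 1) := by ring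
      _ = row x (y₀ + 1) (k + 1) := row_pascal x y₀ k


section Unimodal

variable (f : ℕ → ℕ)

lemma dec_of (hLC : ∀ k : ℕ, f k * f (k + 2) ≤ f (k + 1) ^ 2)
    (hNIZ : ∀ i j k : ℕ, i ≤ j → j ≤ k → f i ≠ 0 → f k ≠ 0 → f j ≠ 0)
    (t : ℕ) (hdrop : f (t + 1) < f t) :
    ∀ s : ℕ, t ≤ s → f (s + 1) < f s ∨ f (s + 1) = 0 := by
  intro s hs
  induction s, hs using Nat.le_induction with
  | base => exact Or.inl hdrop
  | succ s hs ih =>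
    rcases ih with h | h
    · by_cases hz : f (s + 1) = 0
      · right
        by_contra hnz
        exact (hNIZ t (s + 1) (s + 2) (by omega) (by omega) (by omega) hnz) hz
      · left
        have h1 : f (s + 1) + 1 ≤ f s := h
        have h3 : (f (s + 1) + 1) * f (s + 2) ≤ f (s + 1) ^ 2 :=
          le_trans (Nat.mul_le_mul_right _ h1) (hLC s)
        have h4 : 1 ≤ f (s + 1) := Nat.one_le_iff_ne_zero.mpr hz
        nlinarith
    · right
      by_contra hnz
      exact (hNIZ t (s + 1) (s + 2) (by omega) (by omega) (by omega) hnz) h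

lemma dec_anti (hLC : ∀ k : ℕ, f k * f (k + 2) ≤ f (k + 1) ^ 2)
    (hNIZ : ∀ i j k : ℕ, i ≤ j → j ≤ k → f i ≠ 0 → f k ≠ 0 → f j ≠ 0)
    (t : ℕ) (hdrop : f (t + 1) < f t) :
    ∀ u v : ℕ, t ≤ u → u ≤ v → f v ≤ f u := by
  intro u v hu huv
  induction v, huv using Nat.le_induction with
  | base => exact le_rfl
  | succ v hv ih =>
    have := dec_of f hLC hNIZ t hdrop v (le_trans hu hv)
    omega

lemma exdrop : ∀ u v : ℕ, u ≤ v → f v < f u → ∃ s, u ≤ s ∧ s < v ∧ f (s + 1) < f s := by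
  intro u v huv
  induction v, huv using Nat.le_induction with
  | base => omega
  | succ v hv ih =>
    intro h
    by_cases hc : f (v + 1) < f v
    · exact ⟨v, hv, by omega, hc⟩
    · have h' : f v < f u := by omega
      obtain ⟨s, h1, h2, h3⟩ := ih h'
      exact ⟨s, h1, by omega, h3⟩

lemma unimodal_of (N : ℕ) (hz : ∀ k, N < k → f k = 0)
    (hLC : ∀ k : ℕ, f k * f (k + 2) ≤ f (k + 1) ^ 2)
    (hNIZ : ∀ i j k : ℕ, i ≤ j → j ≤ k → f i ≠ 0 → f k ≠ 0 → f j ≠ 0) :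
    ∃ k₀ : ℕ, (∀ i j : ℕ, i ≤ j → j ≤ k₀ → f i ≤ f j)
      ∧ (∀ i j : ℕ, k₀ ≤ i → i ≤ j → f j ≤ f i) := by
  obtain ⟨k₀, hk₀mem, hk₀⟩ := Finset.exists_mem_eq_sup (Finset.range (N + 1))
    (by simp : (Finset.range (N + 1)).Nonempty) f
  have hmax : ∀ j, f j ≤ f k₀ := by
    intro j
    by_cases hj : j ≤ N
    · rw [← hk₀]; exact Finset.le_sup (Finset.mem_range.mpr (by omega))
    · rw [hz j (by omega)]; exact Nat.zero_le _
  refine ⟨k₀, ?_, ?_⟩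
  · have step : ∀ j, j < k₀ → f j ≤ f (j + 1) := by
      intro j hj
      by_contra hlt
      push_neg at hlt
      have h1 : f k₀ ≤ f (j + 1) :=
        dec_anti f hLC hNIZ j hlt (j + 1) k₀ (by omega) (by omega)
      have h2 : f j ≤ f k₀ := hmax j
      omega
    intro i j hij
    induction j, hij using Nat.le_induction with
    | base => intro _; exact le_rfl
    | succ j hj ih =>
      intro hjk
      exact le_trans (ih (by omega)) (step j (by omega))
  · have step2 : ∀ i, k₀ ≤ i → f (i + 1) ≤ f i := by
      intro i hi
      by_contra h
      push_neg at h
      have hle : f (i + 1) ≤ f k₀ := hmax _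
      rcases Nat.eq_or_lt_of_le hi with heq | hlt
      · subst heq; omega
      · obtain ⟨s, hs1, hs2, hs3⟩ := exdrop f k₀ i (by omega) (by omega)
        have := dec_anti f hLC hNIZ s hs3 i (i + 1) (by omega) (by omega)
        omega
    intro i j hi hij
    induction j, hij using Nat.le_induction with
    | base => exact le_rfl
    | succ j hj ih =>
      exact le_trans (step2 j (by omega)) ih

end Unimodal

end StaircaseAux


open StaircaseAux

/-- Staircase lemma: if `α_1 ≥ … ≥ α_m ≥ 1`, `β_1 < … < β_m`, and
`α_{r+1} + β_{r+1} = α_r + β_r + 1` for `1 ≤ r ≤ m-1`, then the coefficient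
sequence of `P(x) = Σ_r x^{α_r}(1+x)^{β_r}` is log-concave, has no internal
zeros, and in particular is unimodal. -/
theorem staircase_logConcave (m : ℕ) (hm : 1 ≤ m) (α β : ℕ → ℕ)
    (hα : ∀ r, 1 ≤ r → r < m → α (r + 1) ≤ α r)
    (hα1 : 1 ≤ α m)
    (hβ : ∀ r, 1 ≤ r → r < m → β r < β (r + 1))
    (hstair : ∀ r, 1 ≤ r → r < m → α (r + 1) + β (r + 1) = α r + β r + 1) :
    letI P : Polynomial ℕ := ∑ r ∈ Finset.Icc 1 m, X ^ (α r) * (1 + X) ^ (β r)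
    (∀ k : ℕ, 1 ≤ k → P.coeff (k - 1) * P.coeff (k + 1) ≤ (P.coeff k) ^ 2)
    ∧ (∀ i j k : ℕ, i ≤ j → j ≤ k → P.coeff i ≠ 0 → P.coeff k ≠ 0 → P.coeff j ≠ 0)
    ∧ ∃ k₀ : ℕ, (∀ i j : ℕ, i ≤ j → j ≤ k₀ → P.coeff i ≤ P.coeff j)
        ∧ (∀ i j : ℕ, k₀ ≤ i → i ≤ j → P.coeff j ≤ P.coeff i) := by
  set P : Polynomial ℕ := ∑ r ∈ Finset.Icc 1 m, X ^ (α r) * (1 + X) ^ (β r) with hPdef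
  have coeff_term : ∀ a b k : ℕ, ((X : Polynomial ℕ) ^ a * (1 + X) ^ b).coeff k = row a b k := by
    intro a b k
    rw [mul_comm, Polynomial.coeff_mul_X_pow']
    unfold row
    split
    · rw [Polynomial.coeff_one_add_X_pow]; simp
    · rfl
  have hP : ∀ k, P.coeff k = ∑ r ∈ Finset.Icc 1 m, row (α r) (β r) k := by
    intro k
    show (∑ r ∈ Finset.Icc 1 m, (X : Polynomial ℕ) ^ (α r) * (1 + X) ^ (β r)).coeff k = _
    rw [Polynomial.finset_sum_coeff]
    exact Finset.sum_congr rfl fun r _ => coeff_term _ _ _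
  -- the invariant pack by induction
  have key : ∀ n, 1 ≤ n → n ≤ m →
      IP (fun k => ∑ r ∈ Finset.Icc 1 n, row (α r) (β r) k) (α n) (β n) := by
    intro n h1
    induction n, h1 using Nat.le_induction with
    | base =>
      intro _
      have hfun : (fun k => ∑ r ∈ Finset.Icc 1 1, row (α r) (β r) k) = row (α 1) (β 1) := by
        funext k; simp
      rw [hfun]
      exact ip_base _ _
    | succ n hn ih =>
      intro h2
      have ihIP := ih (by omega)
      have hstep := ip_step (hα n hn (by omega)) (hstair n hn (by omega)) ihIP
      have hfun : (fun k => ∑ r ∈ Finset.Icc 1 (n + 1), row (α r) (β r) k) =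
          (fun k => (∑ r ∈ Finset.Icc 1 n, row (α r) (β r) k) + row (α (n + 1)) (β (n + 1)) k) := by
        funext k
        exact Finset.sum_Icc_succ_top (by omega) _
      rw [hfun]
      exact hstep
  obtain ⟨clow, chigh, cLC, cHH, cHH2, cDOM⟩ := key m hm le_rfl
  simp only at clow chigh cLC
  -- no internal zeros
  have hNIZ : ∀ i j k : ℕ, i ≤ j → j ≤ k → P.coeff i ≠ 0 → P.coeff k ≠ 0 → P.coeff j ≠ 0 := by
    have hpos : ∀ k, α m ≤ k → k ≤ α m + β m → P.coeff k ≠ 0 := by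
      intro k h1 h2
      rw [hP]
      have hmem : m ∈ Finset.Icc 1 m := by simp [hm]
      have hge : row (α m) (β m) k ≤ ∑ r ∈ Finset.Icc 1 m, row (α r) (β r) k :=
        Finset.single_le_sum (f := fun r => row (α r) (β r) k) (fun i _ => Nat.zero_le _) hmem
      have := row_pos h1 h2
      omega
    have hl : ∀ k, P.coeff k ≠ 0 → α m ≤ k := by
      intro k hk
      by_contra h
      exact hk (by rw [hP]; exact clow k (by omega))
    have hh : ∀ k, P.coeff k ≠ 0 → k ≤ α m + β m := by
      intro k hk
      by_contra h
      exact hk (by rw [hP]; exact chigh k (by omega))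
    intro i j k hij hjk hi hk
    exact hpos j (le_trans (hl i hi) hij) (le_trans hjk (hh k hk))
  have hLC' : ∀ k : ℕ, P.coeff k * P.coeff (k + 2) ≤ P.coeff (k + 1) ^ 2 := by
    intro k
    rw [hP, hP, hP]
    exact cLC k
  refine ⟨?_, hNIZ, ?_⟩
  · intro k hk
    obtain ⟨j, rfl⟩ : ∃ j, k = j + 1 := ⟨k - 1, by omega⟩
    have : j + 1 - 1 = j := by omega
    rw [this]
    exact hLC' j
  · exact unimodal_of (fun k => P.coeff k) (α m + β m)
      (fun k hk => by show P.coeff k = 0; rw [hP]; exact chigh k hk) hLC' hNIZ
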